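/- Let p be a prime, q = p^h, F = 𝔽_q and E = 𝔽_{q³}. Let ψ be a nontrivial additive character of 𝔽_p with values in ℂ, and let ψ_F = ψ ∘ Tr_{F/𝔽_p} and ψ_E = ψ ∘ Tr_{E/𝔽_p} be the induced additive characters of F and E. Let χ be a multiplicative character of E with values in ℂ (extended by χ(0) = 0) whose restriction χ|_F to the subfield F is nontrivial. Then G(χ|_F, ψ_F) · ( Σ_{x ∈ E} conj(χ)(T(x)) · χ(x) ) = (q − 1) · G(χ, ψ_E), where G(·,·) denotes the Gauss sum Σ_t χ(t)ψ(t), T(x) = x^{q²} + x^q + x is the relative trace from E to F, and conj(χ)(T(x)) means the conjugate character applied to the image of T(x) in E (with value 0 when T(x) = 0). Equivalently, Σ_{x ∈ E} conj(χ)(T(x))·χ(x) = (q − 1)·G(χ, ψ_E)/G(χ|_F, ψ_F). -/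

import Mathlib

/-- Lemma on ratios of Gauss sums.  Let `p` be a prime,
`q = p^h`, `F = 𝔽_q` and `E = 𝔽_{q³}`.  Let `ψ` be a nontrivial additive
character of `𝔽_p = ZMod p` with values in `ℂ`, inducing the additive characters
`ψ_F = ψ ∘ Tr_{F/𝔽_p}` and `ψ_E = ψ ∘ Tr_{E/𝔽_p}`.  Let `χ` be a multiplicative
character of `E` (with `χ 0 = 0`) whose restriction to the subfield `F` is
nontrivial, and let `T x = x^{q²} + x^q + x` be the relative trace from `E` to `F`.
Then `G(χ|_F, ψ_F) · (Σ_{x ∈ E} conj(χ)(T x) · χ x) = (q − 1) · G(χ, ψ_E)`,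
where `G(·,·)` is the Gauss sum. -/
theorem stmt_8 {p h q : ℕ} (hp : p.Prime) (hh : 0 < h) (hq : q = p ^ h)
    {F E : Type*} [Field F] [Fintype F] [Field E] [Fintype E]
    [Algebra F E] [Algebra (ZMod p) F] [Algebra (ZMod p) E]
    (hF : Fintype.card F = q) (hdim : Module.finrank F E = 3)
    (T : E → E) (hT : ∀ x, T x = x ^ q ^ 2 + x ^ q + x)
    (ψ : AddChar (ZMod p) ℂ) (hψ : ψ ≠ 1)
    (χ : MulChar E ℂ)
    (hχF : ∃ t : F, t ≠ 0 ∧ χ (algebraMap F E t) ≠ 1) :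
    (∑ t : F, χ (algebraMap F E t) * ψ (Algebra.trace (ZMod p) F t)) *
        (∑ x : E, (starRingEnd ℂ) (χ (T x)) * χ x)
      = (q - 1 : ℕ) * ∑ t : E, χ t * ψ (Algebra.trace (ZMod p) E t) := by
  classical
  haveI : Fact p.Prime := ⟨hp⟩
  have hq2 : 2 ≤ q := by
    subst hq
    calc 2 ≤ p := hp.two_le
    _ ≤ p ^ h := Nat.le_self_pow (by omega) p
  have hq0 : q ≠ 0 := by omega
  haveI : CharP E p := charP_of_injective_algebraMap (algebraMap (ZMod p) E).injective p
  haveI : IsScalarTower (ZMod p) F E :=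
    IsScalarTower.of_algebraMap_eq' (RingHom.ext_zmod _ _)
  set ι := algebraMap F E with hι
  have hιinj : Function.Injective ι := (algebraMap F E).injective
  -- the Frobenius power as an `F`-algebra equivalence of `E`
  let g : E →ₐ[F] E :=
  { toFun := fun x => x ^ q
    map_one' := one_pow q
    map_mul' := fun x y => mul_pow x y q
    map_zero' := zero_pow hq0
    map_add' := fun x y => by
      simpa only [hq] using add_pow_char_pow (R := E) x y (p := p) (n := h)
    commutes' := fun c => by
      simp only [← map_pow, ← hF, FiniteField.pow_card] }
  let φ : E ≃ₐ[F] E := AlgEquiv.ofBijective g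
    (Finite.injective_iff_bijective.mp (g.toRingHom.injective))
  have hφ : ∀ x : E, φ x = x ^ q := fun _ => rfl
  have hφ2 : ∀ x : E, (φ ^ 2) x = x ^ q ^ 2 := fun x => by
    rw [pow_two, AlgEquiv.mul_apply, hφ, hφ, ← pow_mul, pow_two]
  have hcardE : Fintype.card E = q ^ 3 := by
    rw [Module.card_eq_pow_finrank (K := F) (V := E), hF, hdim]
  -- distinctness of 1, φ, φ²
  obtain ⟨g0, hg0⟩ := IsCyclic.exists_generator (α := Eˣ)
  have hordg : orderOf g0 = q ^ 3 - 1 := by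
    rw [orderOf_eq_card_of_forall_mem_zpowers hg0, Nat.card_eq_fintype_card,
      Fintype.card_units, hcardE]
  have key : ∀ m : ℕ, 0 < m → m < 3 → ∃ x : E, x ^ q ^ m ≠ x := by
    intro m hm hm3
    by_contra hcon
    push_neg at hcon
    have h1 : (g0 : E) ^ q ^ m = (g0 : E) := hcon _
    have h2 : g0 ^ q ^ m = g0 ^ 1 := by
      ext; push_cast; simpa using h1
    have hqm2 : 2 ≤ q ^ m := le_trans hq2 (Nat.le_self_pow (by omega) q)
    have h3 : orderOf g0 ∣ q ^ m - 1 := by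
      have hmod := pow_eq_pow_iff_modEq.mp h2
      exact (Nat.modEq_iff_dvd' (by omega)).mp hmod.symm
    rw [hordg] at h3
    have h5 : q ^ 3 - 1 ≤ q ^ m - 1 :=
      Nat.le_of_dvd (Nat.sub_pos_of_lt (lt_of_lt_of_le one_lt_two hqm2)) h3
    have h6 : q ^ m < q ^ 3 := Nat.pow_lt_pow_right (by omega) hm3
    have h7 : q ^ m - 1 < q ^ 3 - 1 := by
      apply Nat.sub_lt_sub_right (by omega) h6
    exact absurd h5 (by omega)
  have d1 : φ ≠ 1 := by
    obtain ⟨x, hx⟩ := key 1 one_pos (by omega)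
    intro heq
    apply hx
    rw [pow_one, ← hφ x, heq, AlgEquiv.one_apply]
  have d2 : φ ^ 2 ≠ 1 := by
    obtain ⟨x, hx⟩ := key 2 two_pos (by omega)
    intro heq
    apply hx
    rw [← hφ2 x, heq, AlgEquiv.one_apply]
  have d3 : φ ≠ φ ^ 2 := by
    intro heq
    apply d1
    have h12 : (1 : E ≃ₐ[F] E) * φ = φ * φ := by rw [one_mul, ← pow_two, ← heq]
    exact (mul_right_cancel h12).symm
  have hnm1 : (1 : E ≃ₐ[F] E) ∉ ({φ, φ ^ 2} : Finset (E ≃ₐ[F] E)) := by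
    simp only [Finset.mem_insert, Finset.mem_singleton]
    push_neg
    exact ⟨fun h' => d1 h'.symm, fun h' => d2 h'.symm⟩
  have hnm2 : φ ∉ ({φ ^ 2} : Finset (E ≃ₐ[F] E)) := by
    simpa using d3
  have hcard3 : Fintype.card (E ≃ₐ[F] E) = 3 := by
    rw [← Nat.card_eq_fintype_card, IsGalois.card_aut_eq_finrank, hdim]
  have huniv : (Finset.univ : Finset (E ≃ₐ[F] E)) = {1, φ, φ ^ 2} := by
    symm
    apply Finset.eq_of_subset_of_card_le (Finset.subset_univ _)
    rw [Finset.card_univ, hcard3, Finset.card_insert_of_notMem hnm1,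
      Finset.card_insert_of_notMem hnm2, Finset.card_singleton]
  -- the relative trace formula
  have hA : ∀ x : E, ι (Algebra.trace F E x) = T x := by
    intro x
    rw [trace_eq_sum_automorphisms, huniv, hT, Finset.sum_insert hnm1,
      Finset.sum_insert hnm2, Finset.sum_singleton, AlgEquiv.one_apply, hφ, hφ2]
    ring
  have hB : ∀ x : E, Algebra.trace (ZMod p) E x
      = Algebra.trace (ZMod p) F (Algebra.trace F E x) := fun x =>
    (Algebra.trace_trace (S := F) x).symm
  have hC : ∀ (t : F) (x : E), Algebra.trace F E (ι t * x) = t * Algebra.trace F E x := by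
    intro t x
    rw [← Algebra.smul_def, map_smul, smul_eq_mul]
  obtain ⟨u, hu0, hu1⟩ := hχF
  have hsum0 : ∑ t : F, χ (ι t) = 0 := by
    have he := Fintype.sum_bijective (fun t : F => u * t)
      (Equiv.mulLeft₀ u hu0).bijective
      (fun t => χ (ι (u * t))) (fun t => χ (ι t)) (fun t => rfl)
    simp only [map_mul] at he
    rw [← Finset.mul_sum] at he
    by_contra hS
    exact hu1 (mul_right_cancel₀ hS (he.trans (one_mul _).symm))
  have hinv : ∀ z : E, z ≠ 0 → χ⁻¹ z * χ z = 1 := by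
    intro z hz
    rw [← MulChar.mul_apply, MulChar.inv_mul, MulChar.one_apply (isUnit_iff_ne_zero.mpr hz)]
  have hconj : ∀ z : E, (starRingEnd ℂ) (χ z) = χ⁻¹ z := by
    intro z
    rw [starRingEnd_apply, MulChar.star_apply']
  have hstep1 : ∀ s : F,
      χ⁻¹ (ι s) * ∑ t : F, χ (ι t) * ψ (Algebra.trace (ZMod p) F t)
      = ∑ t : F, χ (ι t) * ψ (Algebra.trace (ZMod p) F (s * t)) := by
    intro s
    rcases eq_or_ne s 0 with rfl | hs
    · simp only [map_zero, MulChar.map_zero, zero_mul, AddChar.map_zero_eq_one, mul_one]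
      exact hsum0.symm
    · have he := Fintype.sum_bijective (fun t : F => s * t)
        (Equiv.mulLeft₀ s hs).bijective
        (fun t => χ (ι (s * t)) * ψ (Algebra.trace (ZMod p) F (s * t)))
        (fun t => χ (ι t) * ψ (Algebra.trace (ZMod p) F t)) (fun t => rfl)
      rw [← he]
      simp only [map_mul, mul_assoc]
      rw [← Finset.mul_sum, ← mul_assoc, hinv _ (fun h0 => hs (hιinj (by simpa using h0))),
        one_mul]
  set W : ℂ := ∑ y : E, χ y * ψ (Algebra.trace (ZMod p) E y) with hW
  have hstep2 : ∀ t : F,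
      (∑ x : E, χ x * (χ (ι t) * ψ (Algebra.trace (ZMod p) F (Algebra.trace F E x * t))))
      = if t = 0 then 0 else W := by
    intro t
    rcases eq_or_ne t 0 with rfl | ht
    · simp [MulChar.map_zero]
    · rw [if_neg ht, hW]
      have hιt : ι t ≠ 0 := fun h0 => ht (hιinj (by simpa using h0))
      refine Fintype.sum_bijective (fun x : E => ι t * x)
        (Equiv.mulLeft₀ (ι t) hιt).bijective _ _ (fun x => ?_)
      show χ x * (χ (ι t) * ψ (Algebra.trace (ZMod p) F (Algebra.trace F E x * t)))
        = χ (ι t * x) * ψ (Algebra.trace (ZMod p) E (ι t * x))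
      rw [hB (ι t * x), hC t x, map_mul χ (ι t) x, mul_comm (Algebra.trace F E x) t]
      ring
  have hL : (∑ t : F, χ (ι t) * ψ (Algebra.trace (ZMod p) F t)) *
      (∑ x : E, (starRingEnd ℂ) (χ (T x)) * χ x)
      = ∑ x : E, ∑ t : F, χ x *
          (χ (ι t) * ψ (Algebra.trace (ZMod p) F (Algebra.trace F E x * t))) := by
    rw [mul_comm, Finset.sum_mul]
    refine Finset.sum_congr rfl (fun x _ => ?_)
    rw [hconj, ← hA x, mul_comm (χ⁻¹ (ι (Algebra.trace F E x))) (χ x), mul_assoc,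
      hstep1 (Algebra.trace F E x), Finset.mul_sum]
  rw [hL, Finset.sum_comm]
  rw [Finset.sum_congr rfl (fun t _ => hstep2 t)]
  have hcount : (Finset.univ.filter (fun t : F => ¬ t = 0)).card = q - 1 := by
    have hfe : Finset.filter (fun t : F => ¬ t = 0) Finset.univ = Finset.univ.erase 0 := by
      ext a; simp [Finset.mem_erase, and_comm]
    rw [hfe, Finset.card_erase_of_mem (Finset.mem_univ 0), Finset.card_univ, hF]
  rw [Finset.sum_ite, Finset.sum_const_zero, zero_add, Finset.sum_const, hcount,
    nsmul_eq_mul]
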